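/- Let f : X → 𝒢(Z,C) be a function and x₀ ∈ dom f. The following are equivalent: (a) f(x₀) = cl co ⋃_{x∈X} f(x); (b) for all x ∈ X and all z* ∈ C⁻∖{0}: φ_{f,z*}(x₀) ≤ φ_{f,z*}(x); (c) for all x ∈ X and all z* ∈ C⁻∖{0}: φ_{f,z*}(x₀) ⊖ φ_{f,z*}(x) ≤ 0; (d) for all x ∈ X: 0 ∈ f(x₀) ⊖ f(x); (e) for all x ∈ X and all z* ∈ C⁻∖{0}: φ_{f,z*}(x₀) = −∞ or 0 ≤ φ_{f,z*}(x) ⊖ φ_{f,z*}(x₀). Each of these conditions implies: (f) for all x ∈ X: 0⁺f(x₀) ⊇ f(x) ⊖ f(x₀). -/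

import Mathlib

open Set Pointwise

noncomputable section

variable {Z : Type*} [AddCommGroup Z] [Module ℝ Z] [TopologicalSpace Z]

/-- The inf-residual `A ⊖ B = {z : B + {z} ⊆ A}`. -/
def resid (A B : Set Z) : Set Z := {z : Z | B + {z} ⊆ A}

/-- The recession cone `0⁺A`, with the convention `0⁺∅ = ∅`. -/
def recCone (A : Set Z) : Set Z := {z : Z | A.Nonempty ∧ A + {z} ⊆ A}

/-- `A ⊕ B = cl (A + B)`. -/
def oplus (A B : Set Z) : Set Z := closure (A + B)

/-- Membership in `𝒢(Z,C)`: `A = cl co (A + C)`. -/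
def IsG (C A : Set Z) : Prop := A = closure (convexHull ℝ (A + C))

/-- The set `C⁻ \ {0}` of nonzero elements of the negative dual cone. -/
def negDualNZ (C : Set Z) : Set (Z →L[ℝ] ℝ) :=
  {p : Z →L[ℝ] ℝ | (∀ c ∈ C, p c ≤ 0) ∧ p ≠ 0}

/-- `inf {-z*(z) : z ∈ A}` as an extended real. -/
def scal (p : Z →L[ℝ] ℝ) (A : Set Z) : EReal :=
  sInf ((fun z => ((-(p z) : ℝ) : EReal)) '' A)

/-- Support function `σ(z*|A) = sup {z*(z) : z ∈ A}` as an extended real. -/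
def suppF (p : Z →L[ℝ] ℝ) (A : Set Z) : EReal :=
  sSup ((fun z => ((p z : ℝ) : EReal)) '' A)

/-- Inf-residuation on the extended reals: `r ⊖ s = inf {t ∈ ℝ : r ≤ s + t}`. -/
def eresid (r s : EReal) : EReal :=
  sInf ((fun t : ℝ => (t : EReal)) '' {t : ℝ | r ≤ s + (t : EReal)})

variable {X : Type*} [AddCommGroup X] [Module ℝ X]

/-- The scalarization `φ_{f,z*}(x) = inf {-z*(z) : z ∈ f(x)}`. -/
def phi (f : X → Set Z) (p : Z →L[ℝ] ℝ) (x : X) : EReal := scal p (f x)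

/-- Convexity for set-valued functions:
`f(t x₁ + (1-t) x₂) ⊇ cl (t f(x₁) + (1-t) f(x₂))`. -/
def ConvexSV (f : X → Set Z) : Prop :=
  ∀ x₁ x₂ : X, ∀ t : ℝ, t ∈ Ioo (0:ℝ) 1 →
    closure (t • f x₁ + (1 - t) • f x₂) ⊆ f (t • x₁ + (1 - t) • x₂)

/-- The set-valued directional derivative
`f′(x,u) = ⋂_{t₀>0} cl co ⋃_{0<t<t₀} (1/t)•(f(x+tu) ⊖ f(x))`. -/
def sder (f : X → Set Z) (x u : X) : Set Z :=
  ⋂ t₀ ∈ Ioi (0:ℝ), closure (convexHull ℝ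
    (⋃ t ∈ Ioo (0:ℝ) t₀, (1 / t) • resid (f (x + t • u)) (f x)))

/-- The scalar Dini derivative `φ′_{f,z*}(x,u) = inf_{t>0} (1/t)(φ(x+tu) ⊖ φ(x))`. -/
def phiDer (f : X → Set Z) (p : Z →L[ℝ] ℝ) (x u : X) : EReal :=
  ⨅ t ∈ Ioi (0:ℝ), (((1 / t : ℝ)) : EReal) * eresid (phi f p (x + t • u)) (phi f p x)

end


section EresidHelpers
open Set Pointwise
lemma eresid_le_zero_iff (r s : EReal) : eresid r s ≤ 0 ↔ r ≤ s := by
  constructor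
  · intro h
    have key : ∀ ε : ℝ, 0 < ε → r ≤ s + (ε : EReal) := by
      intro ε hε
      have : sInf ((fun t : ℝ => (t : EReal)) '' {t : ℝ | r ≤ s + (t : EReal)}) < (ε : EReal) :=
        lt_of_le_of_lt h (by exact_mod_cast hε)
      obtain ⟨b, hb, hbε⟩ := sInf_lt_iff.mp this
      obtain ⟨t, ht, rfl⟩ := hb
      exact le_trans ht (add_le_add_right (le_of_lt hbε) s)
    induction s with
    | bot => simpa using key 1 one_pos
    | coe a =>
      induction r with
      | bot => exact bot_le
      | coe b =>
        have : ∀ ε : ℝ, 0 < ε → b ≤ a + ε := by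
          intro ε hε
          have := key ε hε
          rw [← EReal.coe_add] at this
          exact_mod_cast this
        exact_mod_cast le_of_forall_pos_le_add this
      | top =>
        have := key 1 one_pos
        rw [← EReal.coe_add] at this
        exact absurd (top_le_iff.mp this) (EReal.coe_ne_top _)
    | top => exact le_top
  · intro h
    have : ∀ t : ℝ, 0 < t → eresid r s ≤ (t : EReal) := by
      intro t ht
      apply sInf_le
      exact ⟨t, by simpa using le_trans h (by simpa using add_le_add_right (by exact_mod_cast ht.le : (0:EReal) ≤ t) s), rfl⟩
    by_contra hc
    push_neg at hc
    obtain ⟨t, ht0, hte⟩ := EReal.exists_between_coe_real hc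
    exact absurd (this t (by exact_mod_cast ht0)) (not_le.mpr hte)

lemma eresid_nonneg_iff (r : EReal) (a : ℝ) : 0 ≤ eresid r (a : EReal) ↔ (a : EReal) ≤ r := by
  constructor
  · intro h
    by_contra hc
    push_neg at hc
    induction r with
    | bot =>
      have : eresid ⊥ (a:EReal) ≤ ((-1 : ℝ) : EReal) := sInf_le ⟨-1, by simp, rfl⟩
      have h2 : (0:ℝ) ≤ -1 := by exact_mod_cast le_trans h this
      linarith
    | coe b =>
      have hba : b - a < 0 := by
        have : b < a := by exact_mod_cast hc
        linarith
      have hmem : ((b:EReal)) ≤ (a:EReal) + ((b - a : ℝ) : EReal) := by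
        rw [← EReal.coe_add]; norm_num
      have h1 : eresid (b:EReal) (a:EReal) ≤ (((b-a):ℝ) : EReal) := sInf_le ⟨b - a, hmem, rfl⟩
      have := le_trans h h1
      have : (0:ℝ) ≤ b - a := by exact_mod_cast this
      linarith
    | top => exact absurd hc (by simp)
  · intro h
    apply le_sInf
    rintro b ⟨t, ht, rfl⟩
    by_contra hc
    push_neg at hc
    have ht0 : t < 0 := by exact_mod_cast hc
    have : (a:EReal) + (t:EReal) < (a:EReal) := by
      rw [← EReal.coe_add]; exact_mod_cast by linarith
    exact absurd (le_trans h ht) (not_le.mpr this)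

lemma eresid_empty (r : EReal) (hr : r ≠ ⊥) : eresid r ⊥ = ⊤ := by
  have : {t : ℝ | r ≤ ⊥ + (t : EReal)} = ∅ := by
    ext t; simp [EReal.bot_add, hr, le_bot_iff]
  rw [eresid, this, image_empty, sInf_empty]

end EresidHelpers

theorem stmt_5
  {Z : Type*} [AddCommGroup Z] [Module ℝ Z] [TopologicalSpace Z]
  [IsTopologicalAddGroup Z] [ContinuousSMul ℝ Z] [LocallyConvexSpace ℝ Z] [T2Space Z]
  {X : Type*} [AddCommGroup X] [Module ℝ X]
  (C : Set Z) (hCclosed : IsClosed C) (hCconv : Convex ℝ C)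
  (hCcone : ∀ c ∈ C, ∀ r : ℝ, 0 < r → r • c ∈ C) (hC0 : (0:Z) ∈ C)
  (hdual : (negDualNZ C).Nonempty)
  (f : X → Set Z) (hG : ∀ x, IsG C (f x)) (x₀ : X) (hx₀ : (f x₀).Nonempty) :
    ((f x₀ = closure (convexHull ℝ (⋃ x : X, f x))) ↔
      (∀ x : X, ∀ p ∈ negDualNZ C, phi f p x₀ ≤ phi f p x))
    ∧ ((f x₀ = closure (convexHull ℝ (⋃ x : X, f x))) ↔
      (∀ x : X, ∀ p ∈ negDualNZ C, eresid (phi f p x₀) (phi f p x) ≤ 0))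
    ∧ ((f x₀ = closure (convexHull ℝ (⋃ x : X, f x))) ↔
      (∀ x : X, (0:Z) ∈ resid (f x₀) (f x)))
    ∧ ((f x₀ = closure (convexHull ℝ (⋃ x : X, f x))) ↔
      (∀ x : X, ∀ p ∈ negDualNZ C,
        phi f p x₀ = ⊥ ∨ (0:EReal) ≤ eresid (phi f p x) (phi f p x₀)))
    ∧ ((f x₀ = closure (convexHull ℝ (⋃ x : X, f x))) →
      ∀ x : X, resid (f x) (f x₀) ⊆ recCone (f x₀)) := by
  classical
  have hclosed : IsClosed (f x₀) := by rw [hG x₀]; exact isClosed_closure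
  have hconv : Convex ℝ (f x₀) := by rw [hG x₀]; exact (convex_convexHull ℝ _).closure
  have haddC : f x₀ + C ⊆ f x₀ := by
    intro z hz; rw [hG x₀]; exact subset_closure (subset_convexHull ℝ _ hz)
  have haD : f x₀ = closure (convexHull ℝ (⋃ x : X, f x)) → ∀ x, f x ⊆ f x₀ := by
    intro ha x
    rw [ha]
    exact (subset_iUnion f x).trans ((subset_convexHull ℝ _).trans subset_closure)
  have hDa : (∀ x, f x ⊆ f x₀) → f x₀ = closure (convexHull ℝ (⋃ x : X, f x)) := by
    intro hD
    apply Subset.antisymm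
    · exact (subset_iUnion f x₀).trans ((subset_convexHull ℝ _).trans subset_closure)
    · calc closure (convexHull ℝ (⋃ x : X, f x))
          ⊆ closure (convexHull ℝ (f x₀)) :=
            closure_mono (convexHull_mono (iUnion_subset hD))
        _ = f x₀ := by rw [hconv.convexHull_eq, hclosed.closure_eq]
  have hDB : (∀ x, f x ⊆ f x₀) → ∀ x : X, ∀ p ∈ negDualNZ C, phi f p x₀ ≤ phi f p x := by
    intro hD x p _
    exact sInf_le_sInf (image_mono (hD x))
  have hBD : (∀ x : X, ∀ p ∈ negDualNZ C, phi f p x₀ ≤ phi f p x) → ∀ x, f x ⊆ f x₀ := by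
    intro hB x z hz
    by_contra hzno
    obtain ⟨p, u, hpu, hupz⟩ := geometric_hahn_banach_closed_point hconv hclosed hzno
    obtain ⟨w, hw⟩ := hx₀
    have hpC : ∀ c ∈ C, p c ≤ 0 := by
      intro c hc
      by_contra hpos
      push_neg at hpos
      set r := (u - p w) / p c with hr_def
      have hr : 0 < r := div_pos (by linarith [hpu w hw]) hpos
      have hmem : w + r • c ∈ f x₀ := haddC (add_mem_add hw (hCcone c hc r hr))
      have h1 := hpu _ hmem
      rw [map_add, map_smul, smul_eq_mul] at h1
      have hrc : r * p c = u - p w := div_mul_cancel₀ _ (ne_of_gt hpos)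
      linarith
    have hp0 : p ≠ 0 := by
      intro h
      subst h
      simp only [ContinuousLinearMap.zero_apply] at hpu hupz
      linarith [hpu w hw]
    have hB' := hB x p ⟨hpC, hp0⟩
    have h1 : phi f p x ≤ ((-(p z) : ℝ) : EReal) := sInf_le ⟨z, hz, rfl⟩
    have h2 : ((-u : ℝ) : EReal) ≤ phi f p x₀ := by
      apply le_sInf
      rintro b ⟨w', hw', rfl⟩
      show ((-u : ℝ) : EReal) ≤ ((-(p w') : ℝ) : EReal)
      exact_mod_cast (by linarith [hpu w' hw'] : -u ≤ -(p w'))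
    have h3 : ((-u : ℝ) : EReal) ≤ ((-(p z) : ℝ) : EReal) := h2.trans (hB'.trans h1)
    have h4 : -u ≤ -(p z) := by exact_mod_cast h3
    linarith
  have iff1 : (f x₀ = closure (convexHull ℝ (⋃ x : X, f x))) ↔
      (∀ x : X, ∀ p ∈ negDualNZ C, phi f p x₀ ≤ phi f p x) :=
    ⟨fun ha => hDB (haD ha), fun hb => hDa (hBD hb)⟩
  have hphitop : ∀ p : Z →L[ℝ] ℝ, phi f p x₀ ≠ ⊤ := by
    intro p
    obtain ⟨w, hw⟩ := hx₀
    exact ne_top_of_le_ne_top (EReal.coe_ne_top _) (sInf_le ⟨w, hw, rfl⟩)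
  have hres : ∀ A B : Set Z, ((0:Z) ∈ resid A B ↔ B ⊆ A) := by
    intro A B
    simp [resid, Set.add_singleton]
  refine ⟨iff1, ?_, ?_, ?_, ?_⟩
  · exact iff1.trans (forall_congr' fun x => forall_congr' fun p => forall_congr' fun hp =>
      (eresid_le_zero_iff _ _).symm)
  · exact ⟨fun ha x => (hres _ _).mpr (haD ha x),
      fun hd => hDa fun x => (hres _ _).mp (hd x)⟩
  · refine iff1.trans ⟨fun hb x p hp => ?_, fun he => ?_⟩
    · rcases eq_or_ne (phi f p x₀) ⊥ with h | h
      · exact Or.inl h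
      · right
        have ha := EReal.coe_toReal (hphitop p) h
        rw [← ha]
        exact (eresid_nonneg_iff _ _).mpr (by rw [ha]; exact hb x p hp)
    · intro x p hp
      rcases eq_or_ne (phi f p x₀) ⊥ with hb0 | hb0
      · rw [hb0]; exact bot_le
      · rcases he x p hp with h | h
        · exact absurd h hb0
        · have ha := EReal.coe_toReal (hphitop p) hb0
          rw [← ha] at h ⊢
          exact (eresid_nonneg_iff _ _).mp h
  · intro ha x z hz
    exact ⟨hx₀, hz.trans (haD ha x)⟩
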